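/- Let V be countably infinite, Φ ⊆ Sym(V) closed under composition with all orbits infinite. Let (H(x))_{x∈V} be independent random variables with values in a measurable space (S,𝒮). For each φ ∈ Φ let g_φ : S → S be measurable and set H_φ(x) := g_φ(H(φ(x))). Assume that for all φ₁, φ₂ ∈ Φ the families (H_{φ₁}(x))_{x∈V} and (H_{φ₂}(x))_{x∈V} have the same distribution. Then every event A such that for some measurable B ⊆ S^V one has A = {(H_φ(x))_{x∈V} ∈ B} up to a P-null set for every φ ∈ Φ, satisfies P[A] ∈ {0,1}. -/

import Mathlib

open MeasureTheory

open scoped symmDiff ENNReal NNReal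

/-- Combinatorial lemma: a composition-closed set of permutations with all
orbits infinite admits, for every finite set `F`, two elements with disjoint
images of `F`. -/
lemma exists_disjoint_images {V : Type*} (Φ : Set (Equiv.Perm V))
    (hΦne : Φ.Nonempty)
    (hcomp : ∀ φ ∈ Φ, ∀ ψ ∈ Φ, (φ * ψ : Equiv.Perm V) ∈ Φ)
    (horb : ∀ x : V, {y : V | ∃ φ ∈ Φ, φ x = y}.Infinite)
    (F : Finset V) :
    ∃ φ₁ ∈ Φ, ∃ φ₂ ∈ Φ, ∀ x ∈ F, ∀ y ∈ F, φ₁ x ≠ φ₂ y := by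
  classical
  by_contra hcon
  push_neg at hcon
  obtain ⟨φ₀, hφ₀⟩ := hΦne
  -- the notion of a "pair": every element of Φ maps some point of G into K
  set Pair : Finset V → Finset V → Prop :=
    fun G K => ∀ ψ ∈ Φ, ∃ x ∈ G, ψ x ∈ K with hPair
  -- a pair exists
  have hex : ∃ n : ℕ, ∃ G K : Finset V, Pair G K ∧ G.card = n := by
    refine ⟨F.card, F, F.image φ₀, fun ψ hψ => ?_, rfl⟩
    obtain ⟨x, hx, y, hy, hxy⟩ := hcon ψ hψ φ₀ hφ₀
    exact ⟨x, hx, by rw [hxy]; exact Finset.mem_image_of_mem _ hy⟩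
  set s : Set ℕ := {n | ∃ G K : Finset V, Pair G K ∧ G.card = n} with hs
  obtain ⟨G, K, hGK, hcard⟩ := Nat.sInf_mem hex
  -- G is nonempty
  have hGne : G.Nonempty := by
    obtain ⟨x, hx, -⟩ := hGK φ₀ hφ₀
    exact ⟨x, hx⟩
  obtain ⟨x, hx⟩ := hGne
  -- minimality: no pair with smaller first component; in particular `G.erase x`
  -- can escape any finite set
  have hesc : ∀ K' : Finset V, ∃ ψ ∈ Φ, ∀ z ∈ G.erase x, ψ z ∉ K' := by
    intro K'
    by_contra h
    push_neg at h
    have : (G.erase x).card ∈ s := by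
      refine ⟨G.erase x, K', fun ψ hψ => ?_, rfl⟩
      obtain ⟨z, hz, hzK⟩ := h ψ hψ
      exact ⟨z, hz, hzK⟩
    have hlt : (G.erase x).card < G.card := Finset.card_erase_lt_of_mem hx
    rw [hcard] at hlt
    exact absurd (Nat.sInf_le this) (not_le.2 hlt)
  -- key claim: for every finite Φ₀ ⊆ Φ, some point of K stays in K under all of Φ₀
  have claim : ∀ Φ₀ : Finset (Equiv.Perm V), ↑Φ₀ ⊆ Φ →
      ∃ y ∈ K, ∀ φ ∈ Φ₀, φ y ∈ K := by
    intro Φ₀ hΦ₀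
    obtain ⟨ψ, hψ, hψesc⟩ := hesc (K ∪ Φ₀.biUnion (fun φ => K.image φ.symm))
    have hψx : ψ x ∈ K := by
      obtain ⟨x', hx', hx'K⟩ := hGK ψ hψ
      rcases eq_or_ne x' x with rfl | hne
      · exact hx'K
      · exact absurd (Finset.mem_union_left _ hx'K)
          (hψesc x' (Finset.mem_erase.2 ⟨hne, hx'⟩))
    refine ⟨ψ x, hψx, fun φ hφ => ?_⟩
    obtain ⟨x'', hx'', hx''K⟩ := hGK (φ * ψ) (hcomp φ (hΦ₀ hφ) ψ hψ)
    rcases eq_or_ne x'' x with rfl | hne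
    · exact hx''K
    · exfalso
      refine hψesc x'' (Finset.mem_erase.2 ⟨hne, hx''⟩) (Finset.mem_union_right _ ?_)
      refine Finset.mem_biUnion.2 ⟨φ, hφ, ?_⟩
      refine Finset.mem_image.2 ⟨φ (ψ x''), hx''K, ?_⟩
      simp
  -- pick a finite Φ₀ minimizing the cardinality of the surviving set
  set C : Finset (Equiv.Perm V) → Finset V :=
    fun Φ₀ => K.filter (fun y => ∀ φ ∈ Φ₀, φ y ∈ K) with hC
  have hCne : ∀ Φ₀ : Finset (Equiv.Perm V), ↑Φ₀ ⊆ Φ → (C Φ₀).Nonempty := by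
    intro Φ₀ hΦ₀
    obtain ⟨y, hy, hyK⟩ := claim Φ₀ hΦ₀
    exact ⟨y, Finset.mem_filter.2 ⟨hy, hyK⟩⟩
  have hex2 : ∃ n : ℕ, ∃ Φ₀ : Finset (Equiv.Perm V), ↑Φ₀ ⊆ Φ ∧ (C Φ₀).card = n :=
    ⟨(C ∅).card, ∅, by simp, rfl⟩
  obtain ⟨Φ₀, hΦ₀sub, hΦ₀card⟩ := Nat.sInf_mem hex2
  -- the minimal surviving set is invariant under all of Φ
  have hinvK : ∀ y ∈ C Φ₀, ∀ φ ∈ Φ, φ y ∈ K := by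
    intro y hy φ hφ
    have hsub : C (insert φ Φ₀) ⊆ C Φ₀ := by
      intro z hz
      rw [hC] at hz ⊢
      simp only [Finset.mem_filter] at hz ⊢
      exact ⟨hz.1, fun φ' hφ' => hz.2 φ' (Finset.mem_insert_of_mem hφ')⟩
    have hsub' : ↑(insert φ Φ₀) ⊆ Φ := by
      intro φ' hφ'
      rcases Finset.mem_insert.1 hφ' with rfl | h
      · exact hφ
      · exact hΦ₀sub h
    have hle : sInf {n | ∃ Ψ : Finset (Equiv.Perm V), ↑Ψ ⊆ Φ ∧ (C Ψ).card = n}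
        ≤ (C (insert φ Φ₀)).card := Nat.sInf_le ⟨_, hsub', rfl⟩
    have heq : C (insert φ Φ₀) = C Φ₀ :=
      Finset.eq_of_subset_of_card_le hsub (le_trans (le_of_eq hΦ₀card) hle)
    have : y ∈ C (insert φ Φ₀) := heq ▸ hy
    exact (Finset.mem_filter.1 this).2 φ (Finset.mem_insert_self φ Φ₀)
  obtain ⟨y, hy⟩ := hCne Φ₀ hΦ₀sub
  -- the orbit of y is contained in K, contradicting infiniteness
  have : {z : V | ∃ φ ∈ Φ, φ y = z} ⊆ ↑K := by
    rintro z ⟨φ, hφ, rfl⟩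
    exact hinvK y hy φ hφ
  exact (horb y) (K.finite_toSet.subset this)


/-- `μ s ≤ μ t + μ (s ∆ t)`. -/
lemma meas_le_add_symmDiff {Ω : Type*} [MeasurableSpace Ω] (P : Measure Ω)
    (s t : Set Ω) : P s ≤ P t + P (s ∆ t) := by
  have hsub : s ⊆ t ∪ s ∆ t := by
    intro x hx
    by_cases h : x ∈ t
    · exact Or.inl h
    · exact Or.inr (Set.mem_symmDiff.2 (Or.inl ⟨hx, h⟩))
  exact le_trans (measure_mono hsub) (measure_union_le _ _)

lemma symmDiff_inter_sub {Ω : Type*} (A E₁ E₂ : Set Ω) :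
    A ∆ (E₁ ∩ E₂) ⊆ (A ∆ E₁) ∪ (A ∆ E₂) := by
  intro x hx
  rcases Set.mem_symmDiff.1 hx with ⟨hA, hE⟩ | ⟨hE, hA⟩
  · by_cases h1 : x ∈ E₁
    · exact Or.inr (Set.mem_symmDiff.2 (Or.inl ⟨hA, fun h => hE ⟨h1, h⟩⟩))
    · exact Or.inl (Set.mem_symmDiff.2 (Or.inl ⟨hA, h1⟩))
  · exact Or.inl (Set.mem_symmDiff.2 (Or.inr ⟨hE.1, hA⟩))

/-- Let `V` be countably infinite, `Φ ⊆ Sym(V)` closed under composition with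
all orbits infinite. Let `(H x)_{x ∈ V}` be independent `S`-valued random variables, and for
each `φ ∈ Φ` let `g φ : S → S` be measurable with `H_φ x := g φ (H (φ x))`. If the families
`(H_φ x)_{x ∈ V}` have the same joint distribution for all `φ ∈ Φ`, then every event `A` that
agrees, up to a null set, with `{(H_φ x)_{x ∈ V} ∈ B}` for a single measurable `B` and every
`φ ∈ Φ`, has probability `0` or `1`. -/
theorem stmt1 {V : Type*} [Countable V] [Infinite V]
    {Ω : Type*} [MeasurableSpace Ω] (P : Measure Ω) [IsProbabilityMeasure P]
    {S : Type*} [MeasurableSpace S]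
    (Φ : Set (Equiv.Perm V))
    (hΦne : Φ.Nonempty)
    (hcomp : ∀ φ ∈ Φ, ∀ ψ ∈ Φ, (φ * ψ : Equiv.Perm V) ∈ Φ)
    (horb : ∀ x : V, {y : V | ∃ φ ∈ Φ, φ x = y}.Infinite)
    (H : V → Ω → S) (hH : ∀ x, Measurable (H x))
    (hindep : ProbabilityTheory.iIndepFun H P)
    (g : Equiv.Perm V → S → S) (hg : ∀ φ ∈ Φ, Measurable (g φ))
    (hdist : ∀ φ₁ ∈ Φ, ∀ φ₂ ∈ Φ,
      Measure.map (fun ω => fun x : V => g φ₁ (H (φ₁ x) ω)) P =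
        Measure.map (fun ω => fun x : V => g φ₂ (H (φ₂ x) ω)) P)
    (A : Set Ω) (hA : MeasurableSet A)
    (B : Set (V → S)) (hB : MeasurableSet B)
    (hinv : ∀ φ ∈ Φ, P (symmDiff A {ω | (fun x : V => g φ (H (φ x) ω)) ∈ B}) = 0) :
    P A = 0 ∨ P A = 1 := by

  classical
  obtain ⟨φ₀, hφ₀⟩ := hΦne
  set f : Equiv.Perm V → Ω → (V → S) := fun φ ω x => g φ (H (φ x) ω) with hfdef
  have hfm : ∀ φ ∈ Φ, Measurable (f φ) := fun φ hφ =>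
    measurable_pi_lambda _ fun x => (hg φ hφ).comp (hH (φ x))
  set μ : Measure (V → S) := Measure.map (f φ₀) P with hμdef
  have hμφ : ∀ φ ∈ Φ, Measure.map (f φ) P = μ := fun φ hφ => hdist φ hφ φ₀ hφ₀
  haveI : IsProbabilityMeasure μ :=
    Measure.isProbabilityMeasure_map (hfm φ₀ hφ₀).aemeasurable
  -- cylinders are measure-dense
  have halg : IsSetAlgebra (measurableCylinders (fun _ : V => S)) :=
    ⟨empty_mem_measurableCylinders _,
     fun s hs => compl_mem_measurableCylinders hs,
     fun s t hs ht => union_mem_measurableCylinders hs ht⟩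
  have hdense : μ.MeasureDense (measurableCylinders (fun _ : V => S)) :=
    Measure.MeasureDense.of_generateFrom_isSetAlgebra_finite μ halg
      generateFrom_measurableCylinders.symm
  -- the key estimate
  have key : ∀ ε : ℝ, 0 < ε → ε ≤ 1 →
      P A ≤ P A * P A + 5 * ENNReal.ofReal ε ∧
      P A * P A ≤ P A + 5 * ENNReal.ofReal ε := by
    intro ε hε hε1
    set ε' : ℝ≥0∞ := ENNReal.ofReal ε with hε'def
    have hε'1 : ε' ≤ 1 := by
      rw [hε'def, ← ENNReal.ofReal_one]
      exact ENNReal.ofReal_le_ofReal hε1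
    obtain ⟨t, htmem, htapprox⟩ := hdense.approx B hB (measure_ne_top μ B) ε hε
    obtain ⟨F, C, hCm, rfl⟩ := (mem_measurableCylinders t).1 htmem
    -- two permutations with disjoint images of F
    obtain ⟨φ₁, hφ₁, φ₂, hφ₂, hdisj⟩ :=
      exists_disjoint_images Φ ⟨φ₀, hφ₀⟩ hcomp horb F
    set T₁ : Finset V := F.image φ₁ with hT₁def
    set T₂ : Finset V := F.image φ₂ with hT₂def
    have hT : Disjoint T₁ T₂ := by
      rw [Finset.disjoint_left]
      rintro a ha1 ha2
      obtain ⟨x, hx, rfl⟩ := Finset.mem_image.1 ha1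
      obtain ⟨y, hy, hxy⟩ := Finset.mem_image.1 ha2
      exact hdisj x hx y hy hxy.symm
    -- independence of the two cylinder events
    have hX : ProbabilityTheory.IndepFun
        (fun ω (i : T₁) => H i ω) (fun ω (i : T₂) => H i ω) P :=
      hindep.indepFun_finset T₁ T₂ hT hH
    set θ₁ : ((i : T₁) → S) → ((i : F) → S) :=
      fun h x => g φ₁ (h ⟨φ₁ x, Finset.mem_image_of_mem _ x.2⟩) with hθ₁def
    set θ₂ : ((i : T₂) → S) → ((i : F) → S) :=
      fun h x => g φ₂ (h ⟨φ₂ x, Finset.mem_image_of_mem _ x.2⟩) with hθ₂def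
    have hθ₁m : Measurable θ₁ :=
      measurable_pi_lambda _ fun x => (hg φ₁ hφ₁).comp (measurable_pi_apply _)
    have hθ₂m : Measurable θ₂ :=
      measurable_pi_lambda _ fun x => (hg φ₂ hφ₂).comp (measurable_pi_apply _)
    have hI : ProbabilityTheory.IndepFun
        (θ₁ ∘ fun ω (i : T₁) => H i ω) (θ₂ ∘ fun ω (i : T₂) => H i ω) P :=
      hX.comp hθ₁m hθ₂m
    set E₁ : Set Ω := (θ₁ ∘ fun ω (i : T₁) => H i ω) ⁻¹' C with hE₁def
    set E₂ : Set Ω := (θ₂ ∘ fun ω (i : T₂) => H i ω) ⁻¹' C with hE₂def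
    have hmul : P (E₁ ∩ E₂) = P E₁ * P E₂ :=
      hI.measure_inter_preimage_eq_mul C C hCm hCm
    -- E_i is the preimage of the cylinder under f φ_i
    set T : Set (V → S) := cylinder (α := fun _ : V => S) F C with hTdef
    have hE₁eq : E₁ = f φ₁ ⁻¹' T := rfl
    have hE₂eq : E₂ = f φ₂ ⁻¹' T := rfl
    -- events D_i
    set D₁ : Set Ω := f φ₁ ⁻¹' B with hD₁def
    set D₂ : Set Ω := f φ₂ ⁻¹' B with hD₂def
    have hcylm : MeasurableSet T := MeasurableSet.cylinder (α := fun _ : V => S) F hCm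
    have hDE : ∀ (φ : Equiv.Perm V), φ ∈ Φ →
        P ((f φ ⁻¹' B) ∆ (f φ ⁻¹' T)) ≤ ε' := by
      intro φ hφ
      have : (f φ ⁻¹' B) ∆ (f φ ⁻¹' T) = f φ ⁻¹' (B ∆ T) := by
        ext ω
        simp only [Set.mem_symmDiff, Set.mem_preimage]
      rw [this, ← Measure.map_apply (hfm φ hφ) (hB.symmDiff hcylm), hμφ φ hφ]
      exact le_of_lt htapprox
    have hAD₁ : P (A ∆ D₁) = 0 := hinv φ₁ hφ₁
    have hAD₂ : P (A ∆ D₂) = 0 := hinv φ₂ hφ₂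
    have hAE₁ : P (A ∆ E₁) ≤ ε' := by
      calc P (A ∆ E₁) ≤ P (A ∆ D₁) + P (D₁ ∆ E₁) := measure_symmDiff_le _ _ _
      _ ≤ 0 + ε' := by
          rw [hAD₁]
          exact add_le_add_right (by rw [hD₁def, hE₁eq]; exact hDE φ₁ hφ₁) 0
      _ = ε' := by rw [zero_add]
    have hAE₂ : P (A ∆ E₂) ≤ ε' := by
      calc P (A ∆ E₂) ≤ P (A ∆ D₂) + P (D₂ ∆ E₂) := measure_symmDiff_le _ _ _
      _ ≤ 0 + ε' := by
          rw [hAD₂]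
          exact add_le_add_right (by rw [hD₂def, hE₂eq]; exact hDE φ₂ hφ₂) 0
      _ = ε' := by rw [zero_add]
    -- bounds between P A, P E₁, P E₂
    have hsymm₁ : P (E₁ ∆ A) = P (A ∆ E₁) := by rw [symmDiff_comm]
    have hsymm₂ : P (E₂ ∆ A) = P (A ∆ E₂) := by rw [symmDiff_comm]
    have haE₁ : P A ≤ P E₁ + ε' :=
      le_trans (meas_le_add_symmDiff P A E₁) (add_le_add_right hAE₁ _)
    have haE₂ : P A ≤ P E₂ + ε' :=
      le_trans (meas_le_add_symmDiff P A E₂) (add_le_add_right hAE₂ _)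
    have hE₁a : P E₁ ≤ P A + ε' :=
      le_trans (meas_le_add_symmDiff P E₁ A) (by rw [hsymm₁]; exact add_le_add_right hAE₁ _)
    have hE₂a : P E₂ ≤ P A + ε' :=
      le_trans (meas_le_add_symmDiff P E₂ A) (by rw [hsymm₂]; exact add_le_add_right hAE₂ _)
    have hAEE : P (A ∆ (E₁ ∩ E₂)) ≤ ε' + ε' :=
      le_trans (measure_mono (symmDiff_inter_sub A E₁ E₂))
        (le_trans (measure_union_le _ _) (add_le_add hAE₁ hAE₂))
    have hIEEsymm : P ((E₁ ∩ E₂) ∆ A) = P (A ∆ (E₁ ∩ E₂)) := by rw [symmDiff_comm]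
    have hle1 : P A ≤ 1 := prob_le_one
    have hEle1 : P E₁ ≤ 1 := prob_le_one
    have hEle2 : P E₂ ≤ 1 := prob_le_one
    constructor
    · -- P A ≤ P A * P A + 5 ε'
      calc P A ≤ P (E₁ ∩ E₂) + P (A ∆ (E₁ ∩ E₂)) := meas_le_add_symmDiff P _ _
      _ ≤ P E₁ * P E₂ + (ε' + ε') := by rw [hmul]; exact add_le_add_right hAEE _
      _ ≤ (P A + ε') * (P A + ε') + (ε' + ε') := by
          exact add_le_add_left (mul_le_mul' hE₁a hE₂a) _
      _ = P A * P A + (P A * ε' + ε' * P A + ε' * ε') + (ε' + ε') := by ring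
      _ ≤ P A * P A + (1 * ε' + ε' * 1 + ε' * 1) + (ε' + ε') := by
          gcongr
      _ = P A * P A + 5 * ε' := by ring
    · -- P A * P A ≤ P A + 5 ε'
      calc P A * P A ≤ (P E₁ + ε') * (P E₂ + ε') := mul_le_mul' haE₁ haE₂
      _ = P E₁ * P E₂ + (P E₁ * ε' + ε' * P E₂ + ε' * ε') := by ring
      _ ≤ P (E₁ ∩ E₂) + (1 * ε' + ε' * 1 + ε' * 1) := by
          rw [hmul]; gcongr
      _ = P (E₁ ∩ E₂) + 3 * ε' := by ring
      _ ≤ (P A + P ((E₁ ∩ E₂) ∆ A)) + 3 * ε' := by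
          exact add_le_add_left (meas_le_add_symmDiff P _ _) _
      _ ≤ (P A + (ε' + ε')) + 3 * ε' := by
          rw [hIEEsymm]; exact add_le_add_left (add_le_add_right hAEE _) _
      _ = P A + 5 * ε' := by ring
  -- conclude P A = P A * P A
  have h1 : P A ≤ P A * P A := by
    refine ENNReal.le_of_forall_pos_le_add fun r hr hfin => ?_
    set ε : ℝ := min ((r : ℝ) / 5) 1 with hεdef
    have hεpos : 0 < ε := lt_min (by positivity) one_pos
    have hε1 : ε ≤ 1 := min_le_right _ _
    refine le_trans (key ε hεpos hε1).1 (add_le_add_right ?_ _)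
    calc (5 : ℝ≥0∞) * ENNReal.ofReal ε ≤ 5 * ENNReal.ofReal ((r : ℝ) / 5) := by
          gcongr
          exact min_le_left _ _
    _ = ENNReal.ofReal (5 * ((r : ℝ) / 5)) := by
          rw [ENNReal.ofReal_mul (by norm_num : (0:ℝ) ≤ 5)]
          norm_num
    _ = (r : ℝ≥0∞) := by
          rw [mul_div_cancel₀ _ (by norm_num : (5:ℝ) ≠ 0)]
          exact ENNReal.ofReal_coe_nnreal
  have h2 : P A * P A ≤ P A := by
    refine ENNReal.le_of_forall_pos_le_add fun r hr hfin => ?_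
    set ε : ℝ := min ((r : ℝ) / 5) 1 with hεdef
    have hεpos : 0 < ε := lt_min (by positivity) one_pos
    have hε1 : ε ≤ 1 := min_le_right _ _
    refine le_trans (key ε hεpos hε1).2 (add_le_add_right ?_ _)
    calc (5 : ℝ≥0∞) * ENNReal.ofReal ε ≤ 5 * ENNReal.ofReal ((r : ℝ) / 5) := by
          gcongr
          exact min_le_left _ _
    _ = ENNReal.ofReal (5 * ((r : ℝ) / 5)) := by
          rw [ENNReal.ofReal_mul (by norm_num : (0:ℝ) ≤ 5)]
          norm_num
    _ = (r : ℝ≥0∞) := by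
          rw [mul_div_cancel₀ _ (by norm_num : (5:ℝ) ≠ 0)]
          exact ENNReal.ofReal_coe_nnreal
  have heq : P A * P A = P A := le_antisymm h2 h1
  rcases eq_or_ne (P A) 0 with h0 | h0
  · exact Or.inl h0
  · exact Or.inr ((ENNReal.mul_eq_left h0 (measure_ne_top P A)).1 heq)
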